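/- arXiv:2604.02916 — 2 statements merged into one kernel-verified Lean document; each statement's English description precedes it below -/
import Mathlib

section
/- If g : [0,1] → ℝ is weakly degenerate at 0, i.e., continuous on [0,1], C¹ on (0,1], positive on (0,1], g(0)=0, and x·g'(x) ≤ K·g(x) for some K ∈ [0,1), then 1/g is integrable on (0,1); more precisely there is a constant C > 0 with g(x) ≥ C·x^K for x ∈ (0,1], hence ∫₀¹ dx/g(x) < ∞. -/
open Set MeasureTheory

/-- Under weak degeneracy at 0 (with exponent `K ∈ [0,1)`), there is
`C > 0` with `g x ≥ C * x ^ K` on `(0,1]`, and `1/g` is integrable on `(0,1)`. -/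
theorem stmt1 (g g' : ℝ → ℝ) (K : ℝ) (hK0 : 0 ≤ K) (hK1 : K < 1)
    (hgc : ContinuousOn g (Icc 0 1))
    (hderiv : ∀ x ∈ Ioc (0:ℝ) 1, HasDerivAt g (g' x) x)
    (hg'c : ContinuousOn g' (Ioc 0 1))
    (hpos : ∀ x ∈ Ioc (0:ℝ) 1, 0 < g x)
    (hg0 : g 0 = 0)
    (hWD : ∀ x ∈ Ioc (0:ℝ) 1, x * g' x ≤ K * g x) :
    ∃ C > 0, (∀ x ∈ Ioc (0:ℝ) 1, C * x ^ K ≤ g x) ∧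
      IntegrableOn (fun x => 1 / g x) (Ioo 0 1) := by
  set h : ℝ → ℝ := fun x => g x * x ^ (-K) with hh
  -- h is antitone on Ioc 0 1
  have hcont : ContinuousOn h (Ioc 0 1) := by
    apply ContinuousOn.mul (hgc.mono Ioc_subset_Icc_self)
    exact continuousOn_id.rpow_const (fun x hx => Or.inl (ne_of_gt hx.1))
  have hderivh : ∀ x ∈ Ioo (0:ℝ) 1, HasDerivAt h
      (x ^ (-K - 1) * (x * g' x - K * g x)) x := by
    intro x hx
    have hx0 : (0:ℝ) < x := hx.1
    have H := (hderiv x ⟨hx.1, hx.2.le⟩).mul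
      (Real.hasDerivAt_rpow_const (x := x) (p := -K) (Or.inl hx0.ne'))
    convert H using 1
    · rfl
    · rfl
    · rfl
    rw [show (-K) = (-K - 1) + 1 by ring, Real.rpow_add_one hx0.ne']
    ring
  have hanti : AntitoneOn h (Ioc 0 1) := by
    apply antitoneOn_of_deriv_nonpos (convex_Ioc 0 1) hcont
    · intro x hx
      rw [interior_Ioc] at hx
      exact (hderivh x hx).differentiableAt.differentiableWithinAt
    · intro x hx
      rw [interior_Ioc] at hx
      rw [(hderivh x hx).deriv]
      apply mul_nonpos_of_nonneg_of_nonpos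
      · exact (Real.rpow_pos_of_pos hx.1 _).le
      · have := hWD x ⟨hx.1, hx.2.le⟩
        linarith
  have hg1 : 0 < g 1 := hpos 1 ⟨one_pos, le_refl 1⟩
  have hbound : ∀ x ∈ Ioc (0:ℝ) 1, g 1 * x ^ K ≤ g x := by
    intro x hx
    have h1 : h 1 ≤ h x := hanti hx ⟨one_pos, le_refl 1⟩ hx.2
    have h1' : g 1 ≤ g x * x ^ (-K) := by
      simpa [hh, Real.one_rpow] using h1
    have hxK : (0:ℝ) < x ^ K := Real.rpow_pos_of_pos hx.1 _
    have := mul_le_mul_of_nonneg_right h1' hxK.le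
    calc g 1 * x ^ K ≤ g x * x ^ (-K) * x ^ K := this
      _ = g x := by
          rw [mul_assoc, ← Real.rpow_add hx.1]
          simp
  refine ⟨g 1, hg1, hbound, ?_⟩
  -- integrability
  have hmeas : AEStronglyMeasurable (fun x => 1 / g x)
      (volume.restrict (Ioo (0:ℝ) 1)) := by
    apply ContinuousOn.aestronglyMeasurable ?_ measurableSet_Ioo
    apply ContinuousOn.div continuousOn_const
      (hgc.mono (Ioo_subset_Icc_self))
    intro x hx
    exact (hpos x ⟨hx.1, hx.2.le⟩).ne'
  have hint : IntegrableOn (fun x => (g 1)⁻¹ * x ^ (-K)) (Ioo 0 1) := by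
    have : IntervalIntegrable (fun x : ℝ => x ^ (-K)) volume 0 1 :=
      intervalIntegral.intervalIntegrable_rpow' (by linarith)
    have h2 : IntegrableOn (fun x : ℝ => x ^ (-K)) (Ioo 0 1) :=
      this.1.mono_set Ioo_subset_Ioc_self
    exact h2.const_mul _
  apply hint.integrable.mono' hmeas
  rw [ae_restrict_iff' measurableSet_Ioo]
  filter_upwards with x hx
  have hx' : x ∈ Ioc (0:ℝ) 1 := ⟨hx.1, hx.2.le⟩
  have hgx : 0 < g x := hpos x hx'
  have hb := hbound x hx'
  have hxK : (0:ℝ) < x ^ K := Real.rpow_pos_of_pos hx.1 _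
  rw [Real.norm_of_nonneg (by positivity)]
  rw [Real.rpow_neg hx.1.le, div_eq_mul_inv, one_mul]
  calc (g x)⁻¹ ≤ (g 1 * x ^ K)⁻¹ := by
        apply inv_anti₀ (by positivity) hb
    _ = (g 1)⁻¹ * (x ^ K)⁻¹ := by rw [mul_inv]
end

section
/- (Weighted Poincaré inequality for degenerate coefficient, weakly degenerate case) Let a : [0,1] → ℝ be continuous with a(0) = 0, a > 0 on (0,1], and suppose a(x) ≥ c·x^K on (0,1] for some c > 0 and K ∈ [0,1). Then there is a constant C > 0 such that for every C¹ function u on [0,1] with u(0) = u(1) = 0, ∫₀¹ u(x)² dx ≤ C ∫₀¹ a(x) u'(x)² dx. -/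
open Set MeasureTheory

/-- Weighted Poincaré inequality, weakly degenerate case:
if `a` is continuous on `[0,1]`, `a 0 = 0`, `a > 0` on `(0,1]`, and
`a x ≥ c x^K` with `c > 0`, `K ∈ [0,1)`, then there is `C > 0` such that
`∫₀¹ u² ≤ C ∫₀¹ a (u')²` for all C¹ functions `u` with `u 0 = u 1 = 0`. -/
theorem stmt12 (a : ℝ → ℝ) (c K : ℝ) (hc : 0 < c) (hK0 : 0 ≤ K) (hK1 : K < 1)
    (hac : ContinuousOn a (Icc 0 1)) (ha0 : a 0 = 0)
    (hapos : ∀ x ∈ Ioc (0:ℝ) 1, 0 < a x)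
    (halow : ∀ x ∈ Ioc (0:ℝ) 1, c * x ^ K ≤ a x) :
    ∃ C > 0, ∀ u u' : ℝ → ℝ,
      (∀ x ∈ Icc (0:ℝ) 1, HasDerivWithinAt u (u' x) (Icc 0 1) x) →
      ContinuousOn u' (Icc 0 1) →
      u 0 = 0 → u 1 = 0 →
      ∫ x in Ioo (0:ℝ) 1, (u x) ^ 2 ≤ C * ∫ x in Ioo (0:ℝ) 1, a x * (u' x) ^ 2 := by
  have h1K : (0:ℝ) < 1 - K := by linarith
  set M : ℝ := 1 / (c * (1 - K)) with hM
  have hMpos : 0 < M := by positivity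
  -- continuity of 1/a on (0,1]
  have hainv_cont : ContinuousOn (fun t => 1 / a t) (Ioc (0:ℝ) 1) := by
    apply ContinuousOn.div continuousOn_const (hac.mono Ioc_subset_Icc_self)
    intro t ht; exact (hapos t ht).ne'
  -- integrability of the dominating function
  have hdom_int : IntegrableOn (fun t : ℝ => (1/c) * t ^ (-K)) (Ioc 0 1) := by
    have h := (intervalIntegral.intervalIntegrable_rpow' (r := -K) (by linarith) (a := 0) (b := 1))
    rw [intervalIntegrable_iff_integrableOn_Ioc_of_le (by norm_num)] at h
    exact h.const_mul _
  -- integrability of 1/a on (0,1]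
  have hainv_int : IntegrableOn (fun t => 1 / a t) (Ioc 0 1) := by
    refine hdom_int.mono' (hainv_cont.aestronglyMeasurable measurableSet_Ioc) ?_
    refine (ae_restrict_iff' measurableSet_Ioc).2 (Filter.Eventually.of_forall fun t ht => ?_)
    have htK : (0:ℝ) < t ^ K := Real.rpow_pos_of_pos ht.1 K
    have h1 : 0 < c * t ^ K := mul_pos hc htK
    have h2 : c * t ^ K ≤ a t := halow t ht
    have hat : (0:ℝ) < a t := lt_of_lt_of_le h1 h2
    rw [Real.norm_of_nonneg (le_of_lt (by positivity : (0:ℝ) < 1 / a t))]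
    rw [Real.rpow_neg ht.1.le]
    rw [div_le_iff₀ hat]
    calc (1:ℝ) = (c * t ^ K) * ((1/c) * (t ^ K)⁻¹) := by
          field_simp
      _ ≤ a t * ((1/c) * (t ^ K)⁻¹) := by
          apply mul_le_mul_of_nonneg_right h2; positivity
      _ = (1/c) * (t ^ K)⁻¹ * a t := by ring
  -- bound on the integral of 1/a
  have hMbound : ∫ t in Ioc (0:ℝ) 1, 1 / a t ≤ M := by
    have h1 : ∫ t in Ioc (0:ℝ) 1, 1 / a t ≤ ∫ t in Ioc (0:ℝ) 1, (1/c) * t ^ (-K) := by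
      refine setIntegral_mono_on hainv_int hdom_int measurableSet_Ioc fun t ht => ?_
      have htK : (0:ℝ) < t ^ K := Real.rpow_pos_of_pos ht.1 K
      have h2 : c * t ^ K ≤ a t := halow t ht
      have h1 : 0 < c * t ^ K := mul_pos hc htK
      have hat : (0:ℝ) < a t := lt_of_lt_of_le h1 h2
      rw [Real.rpow_neg ht.1.le, div_le_iff₀ hat]
      calc (1:ℝ) = (c * t ^ K) * ((1/c) * (t ^ K)⁻¹) := by field_simp
        _ ≤ a t * ((1/c) * (t ^ K)⁻¹) := by
            apply mul_le_mul_of_nonneg_right h2; positivity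
        _ = (1/c) * (t ^ K)⁻¹ * a t := by ring
    have h2 : ∫ t in Ioc (0:ℝ) 1, (1/c) * t ^ (-K) = M := by
      rw [integral_const_mul, ← intervalIntegral.integral_of_le (by norm_num : (0:ℝ) ≤ 1)]
      rw [integral_rpow (Or.inl (by linarith))]
      rw [Real.one_rpow, Real.zero_rpow (ne_of_gt (by linarith : (0:ℝ) < -K + 1))]
      rw [show (-K + 1) = 1 - K from by ring, sub_zero, one_div_mul_one_div, hM]
    linarith
  refine ⟨M, hMpos, ?_⟩
  intro u u' hu hu' hu0 hu1
  have hucont : ContinuousOn u (Icc 0 1) := fun x hx => (hu x hx).continuousWithinAt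
  have hsqrta : ContinuousOn (fun t => Real.sqrt (a t)) (Icc (0:ℝ) 1) :=
    Real.continuous_sqrt.comp_continuousOn hac
  set g : ℝ → ℝ := fun t => Real.sqrt (a t) * u' t with hg
  set f : ℝ → ℝ := fun t => (Real.sqrt (a t))⁻¹ with hf
  have hgcont : ContinuousOn g (Icc (0:ℝ) 1) := hsqrta.mul hu'
  have hfcont : ContinuousOn f (Ioc (0:ℝ) 1) := by
    apply ContinuousOn.inv₀ (hsqrta.mono Ioc_subset_Icc_self)
    intro t ht
    exact (Real.sqrt_pos.2 (hapos t ht)).ne'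
  have hconta : ContinuousOn (fun t => a t * u' t ^ 2) (Icc 0 1) := hac.mul (hu'.pow 2)
  have hB_int : IntegrableOn (fun t => a t * u' t ^ 2) (Ioc (0:ℝ) 1) :=
    (hconta.integrableOn_Icc).mono_set Ioc_subset_Icc_self
  set B : ℝ := ∫ t in Ioc (0:ℝ) 1, a t * u' t ^ 2 with hBdef
  have hnonnegau : ∀ t ∈ Ioc (0:ℝ) 1, 0 ≤ a t * u' t ^ 2 := fun t ht =>
    mul_nonneg (hapos t ht).le (sq_nonneg _)
  have hBnonneg : 0 ≤ B :=
    setIntegral_nonneg measurableSet_Ioc hnonnegau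
  -- pointwise bound
  have hpoint : ∀ x ∈ Ioo (0:ℝ) 1, u x ^ 2 ≤ M * B := by
    intro x hx
    have hx1 : Icc (0:ℝ) x ⊆ Icc 0 1 := Icc_subset_Icc le_rfl hx.2.le
    have hIoc1 : Ioc (0:ℝ) x ⊆ Ioc 0 1 := Ioc_subset_Ioc le_rfl hx.2.le
    -- FTC
    have hftc : u x = ∫ t in Ioc (0:ℝ) x, u' t := by
      have := intervalIntegral.integral_eq_sub_of_hasDeriv_right_of_le hx.1.le
        (hucont.mono hx1)
        (fun y hy => by
          have hy' : y ∈ Ioo (0:ℝ) 1 := ⟨hy.1, lt_of_lt_of_le hy.2 hx.2.le⟩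
          have := (hu y (Ioo_subset_Icc_self hy')).hasDerivAt
            (Icc_mem_nhds hy'.1 hy'.2)
          exact this.hasDerivWithinAt)
        ((hu'.mono (by rw [uIcc_of_le hx.1.le]; exact hx1)).intervalIntegrable)
      rw [hu0, sub_zero] at this
      rw [← this, intervalIntegral.integral_of_le hx.1.le]
    -- Hölder on (0, x]
    set μ := volume.restrict (Ioc (0:ℝ) x)
    have hfg : ∀ t ∈ Ioc (0:ℝ) x, |u' t| = ‖f t‖ * ‖g t‖ := by
      intro t ht
      have hat : 0 < a t := hapos t (hIoc1 ht)
      have hst : 0 < Real.sqrt (a t) := Real.sqrt_pos.2 hat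
      rw [Real.norm_eq_abs, Real.norm_eq_abs, ← abs_mul, hf, hg]
      congr 1
      field_simp
    have hfmeas : AEStronglyMeasurable f μ :=
      ((hfcont.mono hIoc1).aestronglyMeasurable measurableSet_Ioc)
    have hgmeas : AEStronglyMeasurable g μ :=
      ((hgcont.mono (hIoc1.trans Ioc_subset_Icc_self)).aestronglyMeasurable measurableSet_Ioc)
    have hf2 : ∀ t ∈ Ioc (0:ℝ) x, f t ^ 2 = 1 / a t := by
      intro t ht
      have hat : 0 ≤ a t := (hapos t (hIoc1 ht)).le
      simp only [hf]
      rw [inv_pow, Real.sq_sqrt hat, one_div]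
    have hg2 : ∀ t ∈ Ioc (0:ℝ) x, g t ^ 2 = a t * u' t ^ 2 := by
      intro t ht
      have hat : 0 ≤ a t := (hapos t (hIoc1 ht)).le
      simp only [hg]
      rw [mul_pow, Real.sq_sqrt hat]
    have hf2_int : Integrable (fun t => f t ^ 2) μ := by
      refine (hainv_int.mono_set hIoc1).congr ?_
      refine (ae_restrict_iff' measurableSet_Ioc).2 (Filter.Eventually.of_forall fun t ht => ?_)
      exact (hf2 t ht).symm
    have hg2_int : Integrable (fun t => g t ^ 2) μ := by
      refine ((hB_int.mono_set hIoc1)).congr ?_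
      refine (ae_restrict_iff' measurableSet_Ioc).2 (Filter.Eventually.of_forall fun t ht => ?_)
      exact (hg2 t ht).symm
    have hfmem : MemLp f (ENNReal.ofReal 2) μ := by
      rw [show ENNReal.ofReal 2 = 2 by norm_num]
      exact (memLp_two_iff_integrable_sq hfmeas).2 hf2_int
    have hgmem : MemLp g (ENNReal.ofReal 2) μ := by
      rw [show ENNReal.ofReal 2 = 2 by norm_num]
      exact (memLp_two_iff_integrable_sq hgmeas).2 hg2_int
    have hpq : Real.HolderConjugate 2 2 := Real.holderConjugate_iff.mpr ⟨one_lt_two, by norm_num⟩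
    have hholder := integral_mul_norm_le_Lp_mul_Lq hpq hfmem hgmem
    -- rewrite the Hölder bound
    have hA2 : ∫ t, ‖f t‖ ^ (2:ℝ) ∂μ = ∫ t in Ioc (0:ℝ) x, 1 / a t := by
      refine setIntegral_congr_fun measurableSet_Ioc fun t ht => ?_
      rw [← hf2 t ht, show ((2:ℝ) = ((2:ℕ):ℝ)) by norm_num, Real.rpow_natCast, Real.norm_eq_abs, sq_abs]
    have hB2 : ∫ t, ‖g t‖ ^ (2:ℝ) ∂μ = ∫ t in Ioc (0:ℝ) x, a t * u' t ^ 2 := by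
      refine setIntegral_congr_fun measurableSet_Ioc fun t ht => ?_
      rw [← hg2 t ht, show ((2:ℝ) = ((2:ℕ):ℝ)) by norm_num, Real.rpow_natCast, Real.norm_eq_abs, sq_abs]
    rw [hA2, hB2] at hholder
    set A' : ℝ := ∫ t in Ioc (0:ℝ) x, 1 / a t with hA'
    set B' : ℝ := ∫ t in Ioc (0:ℝ) x, a t * u' t ^ 2 with hB'
    have hA'le : A' ≤ M := by
      refine le_trans ?_ hMbound
      refine setIntegral_mono_set hainv_int ?_ (HasSubset.Subset.eventuallyLE hIoc1)
      refine (ae_restrict_iff' measurableSet_Ioc).2 (Filter.Eventually.of_forall fun t ht => ?_)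
      exact le_of_lt (by have := hapos t ht; positivity)
    have hB'le : B' ≤ B := by
      refine setIntegral_mono_set hB_int ?_ (HasSubset.Subset.eventuallyLE hIoc1)
      exact (ae_restrict_iff' measurableSet_Ioc).2
        (Filter.Eventually.of_forall hnonnegau)
    have hA'nonneg : 0 ≤ A' :=
      setIntegral_nonneg measurableSet_Ioc fun t ht =>
        le_of_lt (by have := hapos t (hIoc1 ht); positivity)
    have hB'nonneg : 0 ≤ B' :=
      setIntegral_nonneg measurableSet_Ioc fun t ht => hnonnegau t (hIoc1 ht)
    -- combine
    have habs : |u x| ≤ A' ^ ((1:ℝ)/2) * B' ^ ((1:ℝ)/2) := by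
      rw [hftc]
      calc |∫ t in Ioc (0:ℝ) x, u' t| ≤ ∫ t in Ioc (0:ℝ) x, |u' t| := by
            simpa [Real.norm_eq_abs] using
              norm_integral_le_integral_norm (μ := volume.restrict (Ioc (0:ℝ) x)) u'
        _ = ∫ t, ‖f t‖ * ‖g t‖ ∂μ :=
            setIntegral_congr_fun measurableSet_Ioc fun t ht => hfg t ht
        _ ≤ A' ^ ((1:ℝ)/2) * B' ^ ((1:ℝ)/2) := hholder
    have hle2 : A' ^ ((1:ℝ)/2) * B' ^ ((1:ℝ)/2) ≤ M ^ ((1:ℝ)/2) * B ^ ((1:ℝ)/2) := by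
      apply mul_le_mul
      · exact Real.rpow_le_rpow hA'nonneg hA'le (by norm_num)
      · exact Real.rpow_le_rpow hB'nonneg hB'le (by norm_num)
      · positivity
      · positivity
    have h3 : |u x| ≤ M ^ ((1:ℝ)/2) * B ^ ((1:ℝ)/2) := le_trans habs hle2
    calc u x ^ 2 = |u x| ^ 2 := (sq_abs _).symm
      _ ≤ (M ^ ((1:ℝ)/2) * B ^ ((1:ℝ)/2)) ^ 2 :=
          pow_le_pow_left₀ (abs_nonneg _) h3 2
      _ = M * B := by
          rw [mul_pow, ← Real.rpow_natCast (M ^ ((1:ℝ)/2)) 2,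
            ← Real.rpow_natCast (B ^ ((1:ℝ)/2)) 2,
            ← Real.rpow_mul hMpos.le, ← Real.rpow_mul hBnonneg]
          norm_num
  -- integrate the pointwise bound
  have hu2_int : IntegrableOn (fun x => u x ^ 2) (Ioo (0:ℝ) 1) :=
    ((hucont.pow 2).integrableOn_Icc).mono_set Ioo_subset_Icc_self
  have hconst_int : IntegrableOn (fun _ : ℝ => M * B) (Ioo (0:ℝ) 1) :=
    integrableOn_const (by simp)
  calc ∫ x in Ioo (0:ℝ) 1, u x ^ 2 ≤ ∫ _x in Ioo (0:ℝ) 1, M * B :=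
        setIntegral_mono_on hu2_int hconst_int measurableSet_Ioo hpoint
    _ = M * B := by
        rw [setIntegral_const]
        simp
    _ = M * ∫ x in Ioo (0:ℝ) 1, a x * (u' x) ^ 2 := by
        rw [hBdef, integral_Ioc_eq_integral_Ioo]
end
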